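/- Under the hypotheses of the iterative inequality lemma (ρⁿ_t ≤ A log(1/ε) ∫₀^t ρ^{n-1}_s ds + εBt for all ε ∈ (0,1), n ≥ 1, with ρⁿ continuous nonnegative on [0,T]), if A·T* < 1 with T* ≤ T, then sup_{t∈[0,T*]} ρⁿ_t → 0 as n → ∞. -/

import Mathlib

open Real MeasureTheory intervalIntegral Filter

theorem iterative_inequality_sup_tendsto_zero
    (A B T Tstar : ℝ) (hA : 0 < A) (hB : 0 < B) (hT : 0 < T)
    (hTstar : 0 < Tstar) (hTstarT : Tstar ≤ T) (hATstar : A * Tstar < 1)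
    (ρ : ℕ → ℝ → ℝ)
    (hcont : ∀ n, ContinuousOn (ρ n) (Set.Icc 0 T))
    (hnonneg : ∀ n, ∀ t ∈ Set.Icc (0 : ℝ) T, 0 ≤ ρ n t)
    (hrec : ∀ ε : ℝ, 0 < ε → ε < 1 → ∀ n : ℕ, 1 ≤ n → ∀ t ∈ Set.Icc (0 : ℝ) T,
      ρ n t ≤ A * Real.log (1 / ε) * (∫ s in (0 : ℝ)..t, ρ (n - 1) s) + ε * B * t) :
    Tendsto (fun n : ℕ => sSup (ρ n '' Set.Icc 0 Tstar)) atTop (nhds 0) := by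
  set M : ℕ → ℝ := fun n => sSup (ρ n '' Set.Icc 0 Tstar) with hMdef
  have hsub : Set.Icc (0 : ℝ) Tstar ⊆ Set.Icc 0 T := Set.Icc_subset_Icc le_rfl hTstarT
  have hne : (Set.Icc (0 : ℝ) Tstar).Nonempty := ⟨0, le_rfl, hTstar.le⟩
  have hbdd : ∀ n, BddAbove (ρ n '' Set.Icc 0 Tstar) := fun n =>
    (isCompact_Icc.image_of_continuousOn ((hcont n).mono hsub)).bddAbove
  have hMle : ∀ n t, t ∈ Set.Icc (0 : ℝ) Tstar → ρ n t ≤ M n := fun n t ht =>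
    le_csSup (hbdd n) ⟨t, ht, rfl⟩
  have hMnonneg : ∀ n, 0 ≤ M n := fun n =>
    (hnonneg n 0 ⟨le_rfl, hT.le⟩).trans (hMle n 0 ⟨le_rfl, hTstar.le⟩)
  -- key inductive estimate
  have key : ∀ ε : ℝ, 0 < ε → ε < 1 → ∀ n : ℕ, ∀ t ∈ Set.Icc (0 : ℝ) Tstar,
      ρ n t ≤ ((A * Real.log (1 / ε)) ^ n / n.factorial * M 0) * t ^ n
        + ε * B * ∑ i ∈ Finset.range n,
            ((A * Real.log (1 / ε)) ^ i / (i + 1).factorial) * t ^ (i + 1) := by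
    intro ε hε hε1
    set c := A * Real.log (1 / ε) with hc
    have hlogpos : 0 < Real.log (1 / ε) := Real.log_pos (by rw [one_div]; exact one_lt_inv₀ hε |>.mpr hε1)
    have hcpos : 0 < c := mul_pos hA hlogpos
    intro n
    induction n with
    | zero =>
      intro t ht
      simpa using hMle 0 t ht
    | succ n ih =>
      intro t ht
      have ht0 : 0 ≤ t := ht.1
      have htT : t ≤ Tstar := ht.2
      have h1 := hrec ε hε hε1 (n + 1) (Nat.le_add_left 1 n) t (hsub ht)
      simp only [Nat.add_sub_cancel] at h1
      -- integrability
      have hint : IntervalIntegrable (ρ n) volume 0 t := by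
        apply ContinuousOn.intervalIntegrable
        apply (hcont n).mono
        rw [Set.uIcc_of_le ht0]
        exact Set.Icc_subset_Icc le_rfl (htT.trans hTstarT)
      set g : ℝ → ℝ := fun s => (c ^ n / n.factorial * M 0) * s ^ n
        + ε * B * ∑ i ∈ Finset.range n, (c ^ i / (i + 1).factorial) * s ^ (i + 1) with hg
      have hgc : Continuous g := by
        apply Continuous.add
        · exact continuous_const.mul (continuous_pow n)
        · exact continuous_const.mul (continuous_finset_sum _ fun i _ => continuous_const.mul (continuous_pow (i+1)))
      have hmono : (∫ s in (0 : ℝ)..t, ρ n s) ≤ ∫ s in (0 : ℝ)..t, g s := by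
        apply intervalIntegral.integral_mono_on ht0 hint (hgc.intervalIntegrable 0 t)
        intro s hs
        exact ih s ⟨hs.1, hs.2.trans htT⟩
      have hgval : (∫ s in (0 : ℝ)..t, g s)
          = (c ^ n / n.factorial * M 0) * (t ^ (n + 1) / (n + 1))
            + ε * B * ∑ i ∈ Finset.range n,
              (c ^ i / (i + 1).factorial) * (t ^ (i + 2) / (i + 2)) := by
        rw [hg]
        rw [intervalIntegral.integral_add (f := fun s => c ^ n / n.factorial * M 0 * s ^ n)
          (g := fun s => ε * B * ∑ i ∈ Finset.range n, c ^ i / (i + 1).factorial * s ^ (i + 1))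
          ((continuous_const.mul (continuous_pow n)).intervalIntegrable _ _)
          ((continuous_const.mul (continuous_finset_sum _ fun i _ =>
            continuous_const.mul (continuous_pow (i+1)))).intervalIntegrable _ _)]
        rw [intervalIntegral.integral_const_mul, integral_pow,
          intervalIntegral.integral_const_mul,
          intervalIntegral.integral_finset_sum (f := fun i x => c ^ i / (i + 1).factorial * x ^ (i + 1)) (fun i _ =>
            (continuous_const.mul (continuous_pow (i+1))).intervalIntegrable _ _)]
        congr 1
        · ring
        · congr 1
          apply Finset.sum_congr rfl
          intro i _
          rw [intervalIntegral.integral_const_mul, integral_pow]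
          push_cast
          ring
      calc ρ (n + 1) t ≤ c * (∫ s in (0 : ℝ)..t, ρ n s) + ε * B * t := h1
        _ ≤ c * (∫ s in (0 : ℝ)..t, g s) + ε * B * t := by
            gcongr
        _ = (c ^ (n + 1) / (n + 1).factorial * M 0) * t ^ (n + 1)
            + ε * B * ∑ i ∈ Finset.range (n + 1),
                (c ^ i / (i + 1).factorial) * t ^ (i + 1) := by
            rw [hgval]
            have hfacn : ((n + 1).factorial : ℝ) = (n.factorial : ℝ) * (n + 1) := by
              rw [Nat.factorial_succ]; push_cast; ring
            have hterm : ∀ i ∈ Finset.range n,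
                (c ^ (i+1) / ((i+1+1).factorial : ℝ)) * t ^ (i+1+1)
                  = c * ((c ^ i / ((i+1).factorial : ℝ)) * (t ^ (i+2) / (i+2))) := by
              intro i _
              have h2 : ((i+2).factorial : ℝ) = ((i+1).factorial : ℝ) * (i+2) := by
                rw [Nat.factorial_succ]; push_cast; ring
              have h3 : (i+1+1 : ℕ) = i + 2 := rfl
              rw [h3, h2]
              have hf : (0:ℝ) < ((i+1).factorial : ℝ) := by positivity
              have hi2 : (0:ℝ) < ((i:ℝ)+2) := by positivity
              field_simp
              ring
            rw [Finset.sum_range_succ' (fun i => (c ^ i / ((i + 1).factorial : ℝ)) * t ^ (i + 1)) n]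
            rw [Finset.sum_congr rfl hterm]
            simp only [pow_zero, Nat.factorial_one, Nat.cast_one, div_one, one_mul, pow_one]
            rw [← Finset.mul_sum, hfacn]
            have hf : (0:ℝ) < (n.factorial : ℝ) := by positivity
            have hn1 : (0:ℝ) < ((n:ℝ)+1) := by positivity
            field_simp
            ring
  -- sup bound
  have hbound : ∀ ε : ℝ, 0 < ε → ε < 1 → ∀ n : ℕ,
      M n ≤ (A * Real.log (1 / ε) * Tstar) ^ n / n.factorial * M 0
        + ε * B * Tstar * Real.exp (A * Real.log (1 / ε) * Tstar) := by
    intro ε hε hε1 n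
    set c := A * Real.log (1 / ε) with hc
    have hlogpos : 0 < Real.log (1 / ε) :=
      Real.log_pos (by rw [one_div]; exact one_lt_inv₀ hε |>.mpr hε1)
    have hcpos : 0 < c := mul_pos hA hlogpos
    apply csSup_le (hne.image _)
    rintro x ⟨t, ht, rfl⟩
    refine (key ε hε hε1 n t ht).trans ?_
    have ht0 : 0 ≤ t := ht.1
    have htT : t ≤ Tstar := ht.2
    have h1 : (c ^ n / n.factorial * M 0) * t ^ n
        ≤ (c * Tstar) ^ n / n.factorial * M 0 := by
      have hpow : t ^ n ≤ Tstar ^ n := pow_le_pow_left₀ ht0 htT n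
      calc (c ^ n / n.factorial * M 0) * t ^ n
          ≤ (c ^ n / n.factorial * M 0) * Tstar ^ n :=
            mul_le_mul_of_nonneg_left hpow (mul_nonneg (by positivity) (hMnonneg 0))
        _ = (c * Tstar) ^ n / n.factorial * M 0 := by rw [mul_pow]; ring
    have h2 : ∑ i ∈ Finset.range n, (c ^ i / (i + 1).factorial) * t ^ (i + 1)
        ≤ Tstar * Real.exp (c * Tstar) := by
      have hstep : ∑ i ∈ Finset.range n, (c ^ i / (i + 1).factorial) * t ^ (i + 1)
          ≤ Tstar * ∑ i ∈ Finset.range n, (c * Tstar) ^ i / i.factorial := by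
        rw [Finset.mul_sum]
        apply Finset.sum_le_sum
        intro i _
        have hfle : (i.factorial : ℝ) ≤ ((i + 1).factorial : ℝ) := by
          exact_mod_cast Nat.factorial_le (Nat.le_succ i)
        have hfpos : (0:ℝ) < (i.factorial : ℝ) := by positivity
        have hfpos1 : (0:ℝ) < ((i+1).factorial : ℝ) := by positivity
        calc (c ^ i / (i + 1).factorial) * t ^ (i + 1)
            ≤ (c ^ i / (i + 1).factorial) * Tstar ^ (i + 1) := by
              apply mul_le_mul_of_nonneg_left (pow_le_pow_left₀ ht0 htT (i+1))
              positivity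
          _ = Tstar * ((c * Tstar) ^ i / (i+1).factorial) := by rw [mul_pow]; ring
          _ ≤ Tstar * ((c * Tstar) ^ i / i.factorial) := by
              apply mul_le_mul_of_nonneg_left _ hTstar.le
              apply div_le_div_of_nonneg_left _ hfpos hfle
              positivity
      refine hstep.trans ?_
      apply mul_le_mul_of_nonneg_left _ hTstar.le
      exact Real.sum_le_exp_of_nonneg (by positivity) n
    calc (c ^ n / n.factorial * M 0) * t ^ n
          + ε * B * ∑ i ∈ Finset.range n, (c ^ i / (i + 1).factorial) * t ^ (i + 1)
        ≤ (c * Tstar) ^ n / n.factorial * M 0 + ε * B * (Tstar * Real.exp (c * Tstar)) :=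
          add_le_add h1 (mul_le_mul_of_nonneg_left h2 (by positivity))
      _ = (c * Tstar) ^ n / n.factorial * M 0 + ε * B * Tstar * Real.exp (c * Tstar) := by ring
  -- conclusion
  rw [Metric.tendsto_atTop]
  intro δ hδ
  set γ := 1 - A * Tstar with hγ
  have hγpos : 0 < γ := by simp only [hγ]; linarith
  set L0 := Real.log (δ / (2 * B * Tstar)) / γ with hL0
  set ε := min (1/2) (Real.exp L0 / 2) with hεdef
  have hεpos : 0 < ε := lt_min (by norm_num) (by positivity)
  have hε1 : ε < 1 := lt_of_le_of_lt (min_le_left _ _) (by norm_num)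
  have hlogε : Real.log ε < L0 := by
    calc Real.log ε ≤ Real.log (Real.exp L0 / 2) :=
          Real.log_le_log hεpos (min_le_right _ _)
      _ = L0 - Real.log 2 := by
          rw [Real.log_div (Real.exp_ne_zero _) (by norm_num), Real.log_exp]
      _ < L0 := by
          have : 0 < Real.log 2 := Real.log_pos (by norm_num)
          linarith
  have hBT : 0 < B * Tstar := mul_pos hB hTstar
  have hsecond : ε * B * Tstar * Real.exp (A * Real.log (1 / ε) * Tstar) < δ / 2 := by
    have heq : ε * Real.exp (A * Real.log (1 / ε) * Tstar) = Real.exp (γ * Real.log ε) := by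
      rw [one_div, Real.log_inv]
      rw [show γ * Real.log ε = Real.log ε + A * (-Real.log ε) * Tstar by rw [hγ]; ring]
      rw [Real.exp_add, Real.exp_log hεpos]
    have hlt : Real.exp (γ * Real.log ε) < δ / (2 * B * Tstar) := by
      have : γ * Real.log ε < γ * L0 := by
        exact mul_lt_mul_of_pos_left hlogε hγpos
      have hγL0 : γ * L0 = Real.log (δ / (2 * B * Tstar)) := by
        rw [hL0]; field_simp
      calc Real.exp (γ * Real.log ε) < Real.exp (γ * L0) := Real.exp_lt_exp.mpr this
        _ = δ / (2 * B * Tstar) := by rw [hγL0, Real.exp_log (by positivity)]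
    calc ε * B * Tstar * Real.exp (A * Real.log (1 / ε) * Tstar)
        = (B * Tstar) * (ε * Real.exp (A * Real.log (1 / ε) * Tstar)) := by ring
      _ = (B * Tstar) * Real.exp (γ * Real.log ε) := by rw [heq]
      _ < (B * Tstar) * (δ / (2 * B * Tstar)) := by
          exact mul_lt_mul_of_pos_left hlt hBT
      _ = δ / 2 := by field_simp
  have hfirst : Tendsto (fun n : ℕ => (A * Real.log (1 / ε) * Tstar) ^ n / n.factorial * M 0)
      atTop (nhds 0) := by
    simpa using
      (FloorSemiring.tendsto_pow_div_factorial_atTop (A * Real.log (1 / ε) * Tstar)).mul_const (M 0)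
  obtain ⟨N, hN⟩ := Metric.tendsto_atTop.mp hfirst (δ / 2) (by positivity)
  refine ⟨N, fun n hn => ?_⟩
  have hN' := hN n hn
  rw [Real.dist_eq, sub_zero] at hN' ⊢
  rw [abs_of_nonneg (hMnonneg n)]
  have hfb : (A * Real.log (1 / ε) * Tstar) ^ n / n.factorial * M 0 < δ / 2 :=
    lt_of_le_of_lt (le_abs_self _) hN'
  calc M n ≤ (A * Real.log (1 / ε) * Tstar) ^ n / n.factorial * M 0
        + ε * B * Tstar * Real.exp (A * Real.log (1 / ε) * Tstar) := hbound ε hεpos hε1 n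
    _ < δ / 2 + δ / 2 := add_lt_add hfb hsecond
    _ = δ := by ring
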